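/- For a triple (α, β, γ) of elements of a field and a positive integer t, let A be the t × t matrix with A_{ij} = α for i < j, A_{ij} = β for i = j, and A_{ij} = γ for i > j. Then det(A) = (α(β-γ)^t - γ(β-α)^t)/(α-γ) if α ≠ γ, and det(A) = (β-α)^{t-1}·((t-1)α + β) if α = γ. -/

import Mathlib

open Matrix Finset in
lemma det_add_smul_ones' {K : Type*} [Field K] {t : ℕ} (A : Matrix (Fin t) (Fin t) K) :
    ∃ c : K, ∀ x : K, (A + x • Matrix.of (fun _ _ : Fin t => (1:K))).det
      = A.det + x * c := by
  classical
  refine ⟨∑ i, (A.updateRow i (fun _ => 1)).det, fun x => ?_⟩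
  have h1 : (A + x • Matrix.of (fun _ _ : Fin t => (1:K)))
      = A + (Matrix.of fun _ _ : Fin t => x) := by
    ext i j; simp [Matrix.add_apply, Matrix.smul_apply]
  rw [h1]
  have h2 : (A + (Matrix.of fun _ _ : Fin t => x)).det
      = ∑ s : Finset (Fin t),
        (Matrix.detRowAlternating (s.piecewise A (Matrix.of fun _ _ : Fin t => x)) : K) := by
    exact (Matrix.detRowAlternating : AlternatingMap K (Fin t → K) K (Fin t)
      ).toMultilinearMap.map_add_univ A (Matrix.of fun _ _ : Fin t => x)
  rw [h2]
  -- the support set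
  set S : Finset (Finset (Fin t)) :=
    insert Finset.univ (Finset.univ.image fun i : Fin t => Finset.univ.erase i) with hS
  have hzero : ∀ s : Finset (Fin t), s ∉ S →
      (Matrix.detRowAlternating (s.piecewise A (Matrix.of fun _ _ : Fin t => x)) : K) = 0 := by
    intro s hs
    simp only [hS, Finset.mem_insert, Finset.mem_image, Finset.mem_univ, true_and,
      not_or, not_exists] at hs
    obtain ⟨hs1, hs2⟩ := hs
    -- s misses at least two elements
    have h3 : ∃ i, i ∉ s := by
      by_contra h
      push_neg at h
      exact hs1 (Finset.eq_univ_iff_forall.2 h)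
    obtain ⟨i, hi⟩ := h3
    have h4 : ∃ j, j ≠ i ∧ j ∉ s := by
      by_contra h
      push_neg at h
      refine hs2 i ?_
      ext j
      simp only [Finset.mem_erase, Finset.mem_univ, and_true]
      exact ⟨fun hji => h j hji, fun hjs hji => hi (hji ▸ hjs)⟩
    obtain ⟨j, hji, hj⟩ := h4
    refine AlternatingMap.map_eq_zero_of_eq _ _ ?_ hji
    erw [Finset.piecewise_eq_of_notMem _ _ _ hj, Finset.piecewise_eq_of_notMem _ _ _ hi]
    rfl
  rw [← Finset.sum_subset (Finset.subset_univ S) (fun s _ hs => hzero s hs)]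
  have huniv_notmem : Finset.univ ∉ Finset.univ.image fun i : Fin t => Finset.univ.erase i := by
    simp only [Finset.mem_image, Finset.mem_univ, true_and, not_exists]
    intro i h
    have : i ∈ Finset.univ.erase i := by rw [h]; exact Finset.mem_univ i
    simp at this
  rw [hS, Finset.sum_insert huniv_notmem]
  have hterm1 : (Matrix.detRowAlternating
      ((Finset.univ : Finset (Fin t)).piecewise A (Matrix.of fun _ _ : Fin t => x)) : K)
      = A.det := by
    erw [Finset.piecewise_univ]; rfl
  rw [hterm1]
  congr 1
  rw [Finset.sum_image (by
    intro i _ j _ h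
    by_contra hij
    have hmem : i ∈ Finset.univ.erase j := Finset.mem_erase.2 ⟨hij, Finset.mem_univ i⟩
    rw [← show Finset.univ.erase i = Finset.univ.erase j from h] at hmem
    exact (Finset.mem_erase.1 hmem).1 rfl)]
  rw [Finset.mul_sum]
  refine Finset.sum_congr rfl fun i _ => ?_
  have hpw : ((Finset.univ.erase i).piecewise A (Matrix.of fun _ _ : Fin t => x))
      = A.updateRow i (x • fun _ => (1:K)) := by
    ext a b
    by_cases hai : a = i
    · subst hai
      erw [Finset.piecewise_eq_of_notMem _ _ _ (by simp)]
      simp [Matrix.updateRow_apply]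
    · erw [Finset.piecewise_eq_of_mem _ _ _ (by simp [hai])]
      simp [Matrix.updateRow_apply, hai]
  rw [hpw]
  show (A.updateRow i (x • fun _ => (1:K))).det = x * (A.updateRow i fun _ => (1:K)).det
  rw [Matrix.det_updateRow_smul]

/-- Determinant formula for the `(α, β, γ)`-diagonal matrix of size `t`. -/
theorem stmt_13 {K : Type*} [Field K] (α β γ : K) (t : ℕ) (ht : 0 < t) :
    (α ≠ γ →
      (Matrix.of fun i j : Fin t =>
        if (i : ℕ) < (j : ℕ) then α else if i = j then β else γ).det
        = (α * (β - γ) ^ t - γ * (β - α) ^ t) / (α - γ)) ∧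
    (α = γ →
      (Matrix.of fun i j : Fin t =>
        if (i : ℕ) < (j : ℕ) then α else if i = j then β else γ).det
        = (β - α) ^ (t - 1) * ((t - 1) • α + β)) := by
  classical
  constructor
  · intro hαγ
    set A : Matrix (Fin t) (Fin t) K := Matrix.of fun i j : Fin t =>
      if (i : ℕ) < (j : ℕ) then α else if i = j then β else γ with hA
    obtain ⟨c, hc⟩ := det_add_smul_ones' A
    have E1 : A.det + (-α) * c = (β - α) ^ t := by
      rw [← hc (-α)]
      have hlt : (A + (-α) • Matrix.of (fun _ _ : Fin t => (1:K))).BlockTriangular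
          OrderDual.toDual := by
        intro i j hij
        have hij' : (i : ℕ) < (j : ℕ) := hij
        simp only [hA, Matrix.of_apply, Matrix.add_apply, Matrix.smul_apply, smul_eq_mul, mul_one]
        rw [if_pos hij']
        ring
      rw [Matrix.det_of_lowerTriangular _ hlt]
      have : ∀ i : Fin t, (A + (-α) • Matrix.of (fun _ _ : Fin t => (1:K))) i i = β - α := by
        intro i
        simp [hA, Matrix.add_apply]
        ring
      rw [Finset.prod_congr rfl fun i _ => this i]
      simp
    have E2 : A.det + (-γ) * c = (β - γ) ^ t := by
      rw [← hc (-γ)]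
      have hut : (A + (-γ) • Matrix.of (fun _ _ : Fin t => (1:K))).BlockTriangular id := by
        intro i j hij
        have hij' : (j : ℕ) < (i : ℕ) := hij
        simp only [hA, Matrix.of_apply, Matrix.add_apply, Matrix.smul_apply, smul_eq_mul, mul_one]
        rw [if_neg (Nat.not_lt.2 (le_of_lt hij')),
          if_neg (show ¬ i = j from fun hh => absurd hij' (by rw [hh]; exact lt_irrefl _))]
        ring
      rw [Matrix.det_of_upperTriangular hut]
      have : ∀ i : Fin t, (A + (-γ) • Matrix.of (fun _ _ : Fin t => (1:K))) i i = β - γ := by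
        intro i
        simp [hA, Matrix.add_apply]
        ring
      rw [Finset.prod_congr rfl fun i _ => this i]
      simp
    have hne : α - γ ≠ 0 := sub_ne_zero.2 hαγ
    field_simp
    linear_combination (α) * E2 - γ * E1
  · intro h
    subst h
    by_cases hβα : β = α
    · subst hβα
      obtain ⟨n, rfl⟩ : ∃ n, t = n + 1 := ⟨t - 1, (Nat.succ_pred_eq_of_pos ht).symm⟩
      rcases n with _ | n
      · simp [Matrix.det_fin_one]
      · rw [Matrix.det_zero_of_row_eq (i := 0) (j := 1) Fin.zero_ne_one ?_]
        · simp
        · funext j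
          simp only [Matrix.of_apply]
          split_ifs <;> rfl
    · have hne : β - α ≠ 0 := sub_ne_zero.2 hβα
      have hrw : (Matrix.of fun i j : Fin t =>
          if (i : ℕ) < (j : ℕ) then α else if i = j then β else α)
          = (β - α) • (1 + Matrix.replicateCol Unit (fun _ => α / (β - α)) *
              Matrix.replicateRow Unit (fun _ => (1:K))) := by
        ext i j
        simp only [Matrix.of_apply, Matrix.smul_apply, Matrix.add_apply, Matrix.one_apply,
          Matrix.mul_apply, Matrix.replicateCol_apply, Matrix.replicateRow_apply, Finset.univ_unique,
          Finset.sum_singleton, smul_eq_mul]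
        by_cases hij : i = j
        · subst hij
          simp only [if_pos rfl, lt_irrefl, if_neg (lt_irrefl (i : ℕ))]
          simp
          rw [mul_add, mul_div_cancel₀ α hne]; ring
        · have : ¬ i = j := hij
          simp only [if_neg this]
          have h2 : (if (i:ℕ) < (j:ℕ) then α else α) = α := by split <;> rfl
          rw [h2]
          simp
          rw [mul_div_cancel₀ α hne]
      rw [hrw, Matrix.det_smul, Matrix.det_one_add_replicateCol_mul_replicateRow]
      obtain ⟨n, rfl⟩ : ∃ n, t = n + 1 := ⟨t - 1, (Nat.succ_pred_eq_of_pos ht).symm⟩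
      simp only [Fintype.card_fin, Nat.add_sub_cancel, dotProduct,
        Finset.sum_const, Finset.card_univ, Fintype.card_fin, one_mul, smul_eq_mul,
        nsmul_eq_mul]
      push_cast
      field_simp
      ring
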